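/- With the setup of mixture couplings: if P = Σᵢ θᵢ Pᵢ and Q = Σⱼ ηⱼ Qⱼ, then the Wasserstein-type distance obtained by minimizing Σᵢⱼ wᵢⱼ · Wₚᵖ(Pᵢ, Qⱼ) over transport matrices w with row sums θ and column sums η is an upper bound for the p-Wasserstein distance: Wₚᵖ(P, Q) ≤ min_{w ∈ Γ(θ,η)} Σᵢⱼ wᵢⱼ Wₚᵖ(Pᵢ, Qⱼ). -/

import Mathlib

open MeasureTheory

lemma map_finsum_measure {α β ι : Type*} [MeasurableSpace α] [MeasurableSpace β]
    (s : Finset ι) (μ : ι → Measure α) {f : α → β} (hf : Measurable f) :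
    (∑ i ∈ s, μ i).map f = ∑ i ∈ s, (μ i).map f := by
  classical
  induction s using Finset.induction with
  | empty => simp
  | insert _ _ h ih => simp [Finset.sum_insert h, Measure.map_add _ _ hf, ih]

/-- The mixture-Wasserstein upper bound: `Wₚᵖ(P,Q)` is at most the minimum over
transport matrices `w ∈ Γ(θ,η)` of `∑ᵢⱼ wᵢⱼ Wₚᵖ(Pᵢ,Qⱼ)`, assuming optimal couplings
between the components exist. -/
theorem wasserstein_le_mixture_wasserstein (n : ℕ) (p : ℝ) (hp : 1 ≤ p) (m k : ℕ)
    (θ : Fin m → NNReal) (η : Fin k → NNReal)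
    (hθ : ∑ i, θ i = 1) (hη : ∑ j, η j = 1)
    (Pi : Fin m → Measure (Fin n → ℝ)) (Qj : Fin k → Measure (Fin n → ℝ))
    (hPi : ∀ i, IsProbabilityMeasure (Pi i)) (hQj : ∀ j, IsProbabilityMeasure (Qj j))
    (P Q : Measure (Fin n → ℝ))
    (hP : P = ∑ i, (θ i : ENNReal) • Pi i)
    (hQ : Q = ∑ j, (η j : ENNReal) • Qj j)
    (W : Fin m → Fin k → ENNReal)
    (hW : ∀ i j, W i j =
      ⨅ γ ∈ {γ : Measure ((Fin n → ℝ) × (Fin n → ℝ)) |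
          IsProbabilityMeasure γ ∧ γ.map Prod.fst = Pi i ∧ γ.map Prod.snd = Qj j},
        ∫⁻ z, ENNReal.ofReal (∑ r, |z.1 r - z.2 r| ^ p) ∂γ)
    (hatt : ∀ i j, ∃ γ : Measure ((Fin n → ℝ) × (Fin n → ℝ)),
      (IsProbabilityMeasure γ ∧ γ.map Prod.fst = Pi i ∧ γ.map Prod.snd = Qj j) ∧
      ∫⁻ z, ENNReal.ofReal (∑ r, |z.1 r - z.2 r| ^ p) ∂γ = W i j) :
    (⨅ γ ∈ {γ : Measure ((Fin n → ℝ) × (Fin n → ℝ)) |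
        IsProbabilityMeasure γ ∧ γ.map Prod.fst = P ∧ γ.map Prod.snd = Q},
      ∫⁻ z, ENNReal.ofReal (∑ r, |z.1 r - z.2 r| ^ p) ∂γ)
    ≤ ⨅ w ∈ {w : Fin m → Fin k → NNReal |
          (∀ i, ∑ j, w i j = θ i) ∧ (∀ j, ∑ i, w i j = η j)},
        ∑ i, ∑ j, (w i j : ENNReal) * W i j := by
  refine le_iInf₂ fun w hw => ?_
  obtain ⟨hrow, hcol⟩ := hw
  choose γij h1 hcost using hatt
  have hprob := fun i j => (h1 i j).1
  have hfst := fun i j => (h1 i j).2.1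
  have hsnd := fun i j => (h1 i j).2.2
  set γ : Measure ((Fin n → ℝ) × (Fin n → ℝ)) :=
    ∑ i, ∑ j, (w i j : ENNReal) • γij i j with hγ
  have hmem : γ ∈ {γ : Measure ((Fin n → ℝ) × (Fin n → ℝ)) |
      IsProbabilityMeasure γ ∧ γ.map Prod.fst = P ∧ γ.map Prod.snd = Q} := by
    refine ⟨⟨?_⟩, ?_, ?_⟩
    · have : ∀ i j, (γij i j) Set.univ = 1 := fun i j => (hprob i j).measure_univ
      simp [hγ, Measure.finset_sum_apply, this, ← ENNReal.coe_finset_sum, hrow, hθ]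
    · rw [hγ, map_finsum_measure _ _ measurable_fst, hP]
      refine Finset.sum_congr rfl fun i _ => ?_
      rw [map_finsum_measure _ _ measurable_fst]
      simp_rw [Measure.map_smul, hfst]
      rw [← Finset.sum_smul, ← ENNReal.coe_finset_sum, hrow]
    · rw [hγ, map_finsum_measure _ _ measurable_snd]
      simp_rw [map_finsum_measure _ _ measurable_snd, Measure.map_smul, hsnd]
      rw [Finset.sum_comm, hQ]
      refine Finset.sum_congr rfl fun j _ => ?_
      rw [← Finset.sum_smul, ← ENNReal.coe_finset_sum, hcol]
  refine le_trans (biInf_le _ hmem) (le_of_eq ?_)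
  rw [hγ, lintegral_finset_sum_measure]
  refine Finset.sum_congr rfl fun i _ => ?_
  rw [lintegral_finset_sum_measure]
  refine Finset.sum_congr rfl fun j _ => ?_
  rw [lintegral_smul_measure, hcost, smul_eq_mul]
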